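/- Let L̂ be the complex subspace of (V_ℂ×ℂ^{h+2k}) ⊕ (V*_ℂ×ℂ^{h+2k}) obtained from a complex maximally isotropic L ⊆ (V_ℂ×ℂʰ)⊕(V*_ℂ×ℂʰ) with L ∩ L̄ = 0 by L̂ = {(X,u,w−√−1 J₀w) ⊕ (α,v,s−√−1 J₀s) : (X,u)⊕(α,v) ∈ L, w,s ∈ ℝ²ᵏ}, where J₀ is the standard complex structure on ℝ²ᵏ. Then L̂ is maximally isotropic of complex dimension dim V + h + 2k and satisfies L̂ ∩ conj(L̂) = 0. -/
import Mathlib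


open scoped BigOperators
open Complex

/-- The complex-bilinear neutral pairing on `(V_ℂ×ℂʰ) ⊕ (V*_ℂ×ℂʰ)`, with
`V_ℂ = ℂⁿ` and the dual identified with `ℂⁿ` via coordinates. -/
noncomputable def cPairingH (n h : ℕ)
    (p q : ((Fin n → ℂ) × (Fin h → ℂ)) × ((Fin n → ℂ) × (Fin h → ℂ))) : ℂ :=
  (1 / 2) * (∑ i, q.2.1 i * p.1.1 i + ∑ i, p.2.1 i * q.1.1 i +
    ∑ a, p.1.2 a * q.2.2 a + ∑ a, q.1.2 a * p.2.2 a)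

/-- Conjugation on the index-`h` stable big space. -/
def cConjH (n h : ℕ)
    (p : ((Fin n → ℂ) × (Fin h → ℂ)) × ((Fin n → ℂ) × (Fin h → ℂ))) :
    ((Fin n → ℂ) × (Fin h → ℂ)) × ((Fin n → ℂ) × (Fin h → ℂ)) :=
  ((fun i => starRingEnd ℂ (p.1.1 i), fun a => starRingEnd ℂ (p.1.2 a)),
   (fun i => starRingEnd ℂ (p.2.1 i), fun a => starRingEnd ℂ (p.2.2 a)))

/-- The complex-bilinear neutral pairing on the stable big space of index
`h + 2k`, with `ℂ^{h+2k}` modelled by `(Fin h → ℂ) × ((Fin k → ℂ) × (Fin k → ℂ))`,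
the last two factors corresponding to the basis `(e_p, f_p)` of `ℝ²ᵏ`. -/
noncomputable def cPairingBig (n h k : ℕ)
    (p q : ((Fin n → ℂ) × ((Fin h → ℂ) × ((Fin k → ℂ) × (Fin k → ℂ)))) ×
      ((Fin n → ℂ) × ((Fin h → ℂ) × ((Fin k → ℂ) × (Fin k → ℂ))))) : ℂ :=
  (1 / 2) * (∑ i, q.2.1 i * p.1.1 i + ∑ i, p.2.1 i * q.1.1 i +
    (∑ a, p.1.2.1 a * q.2.2.1 a + ∑ j, p.1.2.2.1 j * q.2.2.2.1 j +
      ∑ j, p.1.2.2.2 j * q.2.2.2.2 j) +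
    (∑ a, q.1.2.1 a * p.2.2.1 a + ∑ j, q.1.2.2.1 j * p.2.2.2.1 j +
      ∑ j, q.1.2.2.2 j * p.2.2.2.2 j))

/-- Conjugation on the index-`h + 2k` stable big space. -/
def cConjBig (n h k : ℕ)
    (p : ((Fin n → ℂ) × ((Fin h → ℂ) × ((Fin k → ℂ) × (Fin k → ℂ)))) ×
      ((Fin n → ℂ) × ((Fin h → ℂ) × ((Fin k → ℂ) × (Fin k → ℂ))))) :
    ((Fin n → ℂ) × ((Fin h → ℂ) × ((Fin k → ℂ) × (Fin k → ℂ)))) ×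
      ((Fin n → ℂ) × ((Fin h → ℂ) × ((Fin k → ℂ) × (Fin k → ℂ)))) :=
  ((fun i => starRingEnd ℂ (p.1.1 i),
     (fun a => starRingEnd ℂ (p.1.2.1 a),
      (fun j => starRingEnd ℂ (p.1.2.2.1 j),
       fun j => starRingEnd ℂ (p.1.2.2.2 j)))),
   (fun i => starRingEnd ℂ (p.2.1 i),
     (fun a => starRingEnd ℂ (p.2.2.1 a),
      (fun j => starRingEnd ℂ (p.2.2.2.1 j),
       fun j => starRingEnd ℂ (p.2.2.2.2 j)))))

/-- Auxiliary linear map assembling the prolonged space. -/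
def stmt17BigMap (n h k : ℕ) :
    ((((Fin n → ℂ) × (Fin h → ℂ)) × ((Fin n → ℂ) × (Fin h → ℂ))) ×
      ((Fin k → ℂ) × (Fin k → ℂ))) →ₗ[ℂ]
    (((Fin n → ℂ) × ((Fin h → ℂ) × ((Fin k → ℂ) × (Fin k → ℂ)))) ×
      ((Fin n → ℂ) × ((Fin h → ℂ) × ((Fin k → ℂ) × (Fin k → ℂ))))) where
  toFun x := ((x.1.1.1, (x.1.1.2, (x.2.1, fun j => -Complex.I * x.2.1 j))),
              (x.1.2.1, (x.1.2.2, (x.2.2, fun j => -Complex.I * x.2.2 j))))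
  map_add' x y := by
    simp [Prod.ext_iff, funext_iff, mul_add]
  map_smul' c x := by
    simp [Prod.ext_iff, funext_iff, smul_eq_mul, mul_comm, mul_left_comm]


/-- Prolongation of a generalized complex structure by the standard complex
structure `J₀` of `ℝ²ᵏ` (`J₀e_p = f_p`, `J₀f_p = −e_p`): if `L` is maximally
isotropic of index `h` with `L ∩ L̄ = 0`, then
`L̂ = {(X,u,w−√−1 J₀w) ⊕ (α,v,s−√−1 J₀s) : (X,u)⊕(α,v) ∈ L, w,s ∈ ℝ²ᵏ}`
is maximally isotropic of complex dimension `n + h + 2k` with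
`L̂ ∩ conj(L̂) = 0`.  Here `w = (w₁,w₂) ∈ ℝᵏ × ℝᵏ` and
`w − √−1 J₀w = (w₁ + i w₂, w₂ − i w₁)`. -/
theorem stmt17 (n h k : ℕ)
    (L : Submodule ℂ (((Fin n → ℂ) × (Fin h → ℂ)) ×
      ((Fin n → ℂ) × (Fin h → ℂ))))
    (hiso : ∀ p ∈ L, ∀ q ∈ L, cPairingH n h p q = 0)
    (hrank : Module.finrank ℂ L = n + h)
    (hconj : ∀ p ∈ L, cConjH n h p ∈ L → p = 0)
    (Lhat : Submodule ℂ (((Fin n → ℂ) × ((Fin h → ℂ) × ((Fin k → ℂ) × (Fin k → ℂ)))) ×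
      ((Fin n → ℂ) × ((Fin h → ℂ) × ((Fin k → ℂ) × (Fin k → ℂ))))))
    (hLhat : ∀ p, p ∈ Lhat ↔ ∃ (X : Fin n → ℂ) (u : Fin h → ℂ)
      (α : Fin n → ℂ) (v : Fin h → ℂ) (w1 w2 s1 s2 : Fin k → ℝ),
        ((X, u), (α, v)) ∈ L ∧
        p = ((X, (u, (fun j => (w1 j : ℂ) + Complex.I * w2 j,
                      fun j => (w2 j : ℂ) - Complex.I * w1 j))),
             (α, (v, (fun j => (s1 j : ℂ) + Complex.I * s2 j,
                      fun j => (s2 j : ℂ) - Complex.I * s1 j))))) :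
    (∀ p ∈ Lhat, ∀ q ∈ Lhat, cPairingBig n h k p q = 0) ∧
    Module.finrank ℂ Lhat = n + h + 2 * k ∧
    (∀ p ∈ Lhat, cConjBig n h k p ∈ Lhat → p = 0) := by
  refine ⟨?_, ?_, ?_⟩
  · -- isotropy
    intro p hp q hq
    rw [hLhat] at hp hq
    obtain ⟨X, u, α, v, w1, w2, s1, s2, hL1, rfl⟩ := hp
    obtain ⟨X', u', α', v', w1', w2', s1', s2', hL2, rfl⟩ := hq
    have key := hiso _ hL1 _ hL2
    simp only [cPairingH] at key
    simp only [cPairingBig]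
    have hz1 : (∑ j, ((w1 j : ℂ) + Complex.I * w2 j) * ((s1' j : ℂ) + Complex.I * s2' j)) +
        ∑ j, ((w2 j : ℂ) - Complex.I * w1 j) * ((s2' j : ℂ) - Complex.I * s1' j) = 0 := by
      rw [← Finset.sum_add_distrib]
      refine Finset.sum_eq_zero fun j _ => ?_
      linear_combination ((w1 j : ℂ) * (s1' j : ℂ) + (w2 j : ℂ) * (s2' j : ℂ)) * Complex.I_sq
    have hz2 : (∑ j, ((w1' j : ℂ) + Complex.I * w2' j) * ((s1 j : ℂ) + Complex.I * s2 j)) +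
        ∑ j, ((w2' j : ℂ) - Complex.I * w1' j) * ((s2 j : ℂ) - Complex.I * s1 j) = 0 := by
      rw [← Finset.sum_add_distrib]
      refine Finset.sum_eq_zero fun j _ => ?_
      linear_combination ((w1' j : ℂ) * (s1 j : ℂ) + (w2' j : ℂ) * (s2 j : ℂ)) * Complex.I_sq
    linear_combination key + (1 / 2 : ℂ) * hz1 + (1 / 2 : ℂ) * hz2
  · -- rank
    set Ψ := (stmt17BigMap n h k).comp ((L.subtype).prodMap
      (LinearMap.id : ((Fin k → ℂ) × (Fin k → ℂ)) →ₗ[ℂ] ((Fin k → ℂ) × (Fin k → ℂ)))) with hΨ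
    have hrange : LinearMap.range Ψ = Lhat := by
      ext p
      rw [hLhat]
      constructor
      · rintro ⟨⟨⟨x, hx⟩, a, b⟩, rfl⟩
        refine ⟨x.1.1, x.1.2, x.2.1, x.2.2, fun j => (a j).re, fun j => (a j).im,
          fun j => (b j).re, fun j => (b j).im, hx, ?_⟩
        simp only [hΨ, stmt17BigMap, LinearMap.comp_apply, LinearMap.prodMap_apply,
          LinearMap.id_apply, Submodule.coe_subtype, LinearMap.coe_mk, AddHom.coe_mk]
        refine Prod.ext (Prod.ext rfl (Prod.ext rfl (Prod.ext ?_ ?_)))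
          (Prod.ext rfl (Prod.ext rfl (Prod.ext ?_ ?_))) <;> funext j <;>
          simp [Complex.ext_iff]
      · rintro ⟨X, u, α, v, w1, w2, s1, s2, hmem, rfl⟩
        refine ⟨⟨⟨((X, u), (α, v)), hmem⟩,
          (fun j => (w1 j : ℂ) + Complex.I * w2 j, fun j => (s1 j : ℂ) + Complex.I * s2 j)⟩, ?_⟩
        simp only [hΨ, stmt17BigMap, LinearMap.comp_apply, LinearMap.prodMap_apply,
          LinearMap.id_apply, Submodule.coe_subtype, LinearMap.coe_mk, AddHom.coe_mk]
        refine Prod.ext (Prod.ext rfl (Prod.ext rfl (Prod.ext rfl ?_)))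
          (Prod.ext rfl (Prod.ext rfl (Prod.ext rfl ?_))) <;> funext j
        · linear_combination (-((w2 j : ℂ))) * Complex.I_sq
        · linear_combination (-((s2 j : ℂ))) * Complex.I_sq
    have hinj : Function.Injective Ψ := by
      intro x y hxy
      simp only [hΨ, stmt17BigMap, LinearMap.comp_apply, LinearMap.prodMap_apply,
        LinearMap.id_apply, Submodule.coe_subtype, LinearMap.coe_mk, AddHom.coe_mk,
        Prod.mk.injEq] at hxy
      obtain ⟨⟨h1, h2, h3, _⟩, h4, h5, h6, _⟩ := hxy
      have hxv : (x.1 : ((Fin n → ℂ) × (Fin h → ℂ)) × ((Fin n → ℂ) × (Fin h → ℂ))) = y.1 :=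
        Prod.ext (Prod.ext h1 h2) (Prod.ext h4 h5)
      exact Prod.ext (Subtype.ext hxv) (Prod.ext h3 h6)
    have := LinearEquiv.finrank_eq (LinearEquiv.ofInjective Ψ hinj)
    rw [hrange] at this
    rw [← this, Module.finrank_prod, hrank, Module.finrank_prod, Module.finrank_pi]
    simp only [Fintype.card_fin]
    omega
  · -- L̂ ∩ conj L̂ = 0
    intro p hp hcp
    rw [hLhat] at hp hcp
    obtain ⟨X, u, α, v, w1, w2, s1, s2, hL1, rfl⟩ := hp
    obtain ⟨X', u', α', v', w1', w2', s1', s2', hL2, heq⟩ := hcp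
    simp only [cConjBig, Prod.mk.injEq] at heq
    obtain ⟨⟨e1, e2, e3, e4⟩, e5, e6, e7, e8⟩ := heq
    -- extract vanishing of w, s
    have hw1 : ∀ j, w1 j = 0 ∧ w2 j = 0 := by
      intro j
      have c3 := congrFun e3 j
      have c4 := congrFun e4 j
      simp only [map_add, map_sub, map_mul, Complex.conj_ofReal, Complex.conj_I] at c3 c4
      rw [Complex.ext_iff] at c3 c4
      simp at c3 c4
      constructor <;> linarith [c3.1, c3.2, c4.1, c4.2]
    have hs1 : ∀ j, s1 j = 0 ∧ s2 j = 0 := by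
      intro j
      have c3 := congrFun e7 j
      have c4 := congrFun e8 j
      simp only [map_add, map_sub, map_mul, Complex.conj_ofReal, Complex.conj_I] at c3 c4
      rw [Complex.ext_iff] at c3 c4
      simp at c3 c4
      constructor <;> linarith [c3.1, c3.2, c4.1, c4.2]
    have hmemconj : cConjH n h ((X, u), (α, v)) ∈ L := by
      have : cConjH n h ((X, u), (α, v)) = ((X', u'), (α', v')) := by
        simp only [cConjH]
        exact Prod.ext (Prod.ext e1 e2) (Prod.ext e5 e6)
      rw [this]; exact hL2
    have h0 := hconj _ hL1 hmemconj
    rw [Prod.ext_iff, Prod.ext_iff, Prod.ext_iff] at h0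
    obtain ⟨⟨hX, hu⟩, hα, hv⟩ := h0
    simp only [Prod.fst, Prod.snd] at hX hu hα hv
    refine Prod.ext (Prod.ext ?_ (Prod.ext ?_ (Prod.ext ?_ ?_)))
      (Prod.ext ?_ (Prod.ext ?_ (Prod.ext ?_ ?_)))
    · exact hX
    · exact hu
    · funext j; simp [(hw1 j).1, (hw1 j).2]
    · funext j; simp [(hw1 j).1, (hw1 j).2]
    · exact hα
    · exact hv
    · funext j; simp [(hs1 j).1, (hs1 j).2]
    · funext j; simp [(hs1 j).1, (hs1 j).2]
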